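/- arXiv:2301.09471 — 5 statements merged into one kernel-verified Lean document; each statement's English description precedes it below -/
import Mathlib

section
/- Let U : ℝ^d → ℝ be a C² convex function and for α ≥ 0 define U_α(x) = U(x) + (α/2)|x|². Let π ∝ e^{-U} dλ and π_α ∝ e^{-U_α} dλ be the associated Gibbs probability measures. Then the Kullback–Leibler divergence satisfies D_KL(π | π_α) ≤ (α²/8) · E_π[|x|⁴]. -/
open MeasureTheory Real
open scoped ENNReal NNReal

lemma exp_neg_le_quad (t : ℝ) (ht : 0 ≤ t) : Real.exp (-t) ≤ 1 - t + t^2/2 := by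
  set f : ℝ → ℝ := fun u => 1 - u + u^2/2 - Real.exp (-u) with hf
  have hd : ∀ u : ℝ, HasDerivAt f (-1 + u + Real.exp (-u)) u := by
    intro u
    have h1 : HasDerivAt (fun u:ℝ => 1 - u) (-1) u := by
      simpa using (hasDerivAt_id u).const_sub 1
    have h2 : HasDerivAt (fun u:ℝ => u^2/2) u u := by
      have := (hasDerivAt_pow 2 u).div_const 2
      simpa using this
    have h3 : HasDerivAt (fun u:ℝ => Real.exp (-u)) (-Real.exp (-u)) u := by
      simpa [Function.comp_def] using (Real.hasDerivAt_exp (-u)).comp u ((hasDerivAt_id u).neg)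
    have := (h1.add h2).sub h3
    rw [hf]; exact this.congr_deriv (by ring)
  have hmono : MonotoneOn f (Set.Ici 0) := by
    apply monotoneOn_of_deriv_nonneg (convex_Ici 0)
      (Continuous.continuousOn (by continuity))
      (fun x _ => (hd x).differentiableAt.differentiableWithinAt)
    intro x hx
    rw [(hd x).deriv]
    nlinarith [Real.one_sub_le_exp_neg x]
  have h0 : f 0 = 0 := by simp [hf]
  have := hmono (Set.self_mem_Ici) ht ht
  rw [h0] at this
  simp only [hf] at this
  linarith


/-- The Kullback–Leibler divergence between the Gibbs measure `π ∝ e^{-U}dλ` and the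
penalized Gibbs measure `π_α ∝ e^{-U_α}dλ`, where `U_α(x) = U(x) + (α/2)|x|²`, is bounded
by `(α²/8)·E_π[|x|⁴]`.  Here `dπ/dπ_α(x) = (Z_α/Z)·exp((α/2)|x|²)`, so
`D_KL(π|π_α) = ∫ (log(Z_α/Z) + (α/2)|x|²) dπ`. -/
theorem kl_penalized_gibbs_le
    (d : ℕ) (hd : 1 ≤ d) (U : EuclideanSpace ℝ (Fin d) → ℝ)
    (hU : ContDiff ℝ 2 U) (hconv : ConvexOn ℝ Set.univ U)
    (α : ℝ) (hα : 0 ≤ α)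
    (Z Zα : ℝ)
    (hZ : Z = ∫ x, Real.exp (-U x))
    (hZα : Zα = ∫ x, Real.exp (-(U x + α / 2 * ‖x‖ ^ 2)))
    (hZint : Integrable (fun x => Real.exp (-U x)))
    (hZαint : Integrable (fun x => Real.exp (-(U x + α / 2 * ‖x‖ ^ 2))))
    (gibbs : Measure (EuclideanSpace ℝ (Fin d)))
    (hgibbs : gibbs = (ENNReal.ofReal Z)⁻¹ •
      (volume.withDensity fun x => ENNReal.ofReal (Real.exp (-U x))))
    (hm4 : Integrable (fun x => ‖x‖ ^ 4) gibbs) :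
    ∫ x, (Real.log (Zα / Z) + α / 2 * ‖x‖ ^ 2) ∂gibbs ≤ α ^ 2 / 8 * ∫ x, ‖x‖ ^ 4 ∂gibbs := by
  have hZpos : 0 < Z := hZ ▸ integral_exp_pos hZint
  have hZαpos : 0 < Zα := hZα ▸ integral_exp_pos hZαint
  set t : EuclideanSpace ℝ (Fin d) → ℝ := fun x => α / 2 * ‖x‖ ^ 2 with ht_def
  have htnn : ∀ x, 0 ≤ t x := fun x => by positivity
  have hlint : ∫⁻ x, ENNReal.ofReal (Real.exp (-U x)) = ENNReal.ofReal Z := by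
    rw [← ofReal_integral_eq_lintegral_ofReal hZint (ae_of_all _ fun x => (Real.exp_pos _).le), hZ]
  have hprob : IsProbabilityMeasure gibbs := by
    constructor
    rw [hgibbs, Measure.smul_apply, withDensity_apply _ MeasurableSet.univ,
      setLIntegral_univ, hlint, smul_eq_mul]
    exact ENNReal.inv_mul_cancel (by simpa using hZpos) ENNReal.ofReal_ne_top
  -- key integral formula
  have hUm : Measurable U := hU.continuous.measurable
  have key : ∫ x, Real.exp (-(t x)) ∂gibbs = Zα / Z := by
    rw [hgibbs, integral_smul_measure]
    have hdens : (fun x : EuclideanSpace ℝ (Fin d) => ENNReal.ofReal (Real.exp (-U x)))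
        = fun x => ((Real.exp (-U x)).toNNReal : ℝ≥0∞) := rfl
    rw [hdens, integral_withDensity_eq_integral_smul
      (by measurability) (fun x => Real.exp (-(t x)))]
    have : (fun x : EuclideanSpace ℝ (Fin d) =>
        (Real.exp (-U x)).toNNReal • Real.exp (-(t x)))
        = fun x => Real.exp (-(U x + t x)) := by
      funext x
      rw [NNReal.smul_def, Real.coe_toNNReal _ (Real.exp_pos _).le, smul_eq_mul,
        ← Real.exp_add]
      ring_nf
    rw [this]
    have : ∫ x, Real.exp (-(U x + t x)) = Zα := hZα.symm
    rw [this]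
    rw [ENNReal.toReal_inv, ENNReal.toReal_ofReal hZpos.le]
    rw [smul_eq_mul, div_eq_inv_mul]
  -- integrability
  have hi2 : Integrable (fun x : EuclideanSpace ℝ (Fin d) => ‖x‖ ^ 2) gibbs := by
    refine ((integrable_const (1:ℝ)).add hm4).mono'
      (Continuous.aestronglyMeasurable ((continuous_norm).pow 2)) (ae_of_all _ fun x => ?_)
    have h1 : (0:ℝ) ≤ ‖x‖ := norm_nonneg x
    simp only [Pi.add_apply]
    rw [Real.norm_eq_abs, abs_of_nonneg (by positivity)]
    nlinarith [sq_nonneg (‖x‖^2 - 1)]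
  have hit : Integrable t gibbs := hi2.const_mul _
  have hit2 : Integrable (fun x => (t x) ^ 2 / 2) gibbs := by
    have : (fun x => (t x) ^ 2 / 2) = fun x => α ^ 2 / 8 * ‖x‖ ^ 4 := by
      funext x; simp only [ht_def]; ring
    rw [this]; exact hm4.const_mul _
  have hiexp : Integrable (fun x => Real.exp (-(t x))) gibbs := by
    refine (integrable_const (1:ℝ)).mono'
      (Continuous.aestronglyMeasurable
        (Real.continuous_exp.comp (continuous_const.mul ((continuous_norm).pow 2)).neg))
      (ae_of_all _ fun x => ?_)
    rw [Real.norm_eq_abs, abs_of_pos (Real.exp_pos _)]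
    exact Real.exp_le_one_iff.mpr (neg_nonpos.mpr (htnn x))
  have hA : Integrable (fun x => 1 - t x) gibbs := (integrable_const (1:ℝ)).sub hit
  -- pointwise bound integrated
  have hcomp : ∫ x, Real.exp (-(t x)) ∂gibbs
      ≤ ∫ x, (1 - t x + (t x) ^ 2 / 2) ∂gibbs := by
    refine integral_mono hiexp (hA.add hit2)
      fun x => exp_neg_le_quad (t x) (htnn x)
  have hsplit : ∫ x, (1 - t x + (t x) ^ 2 / 2) ∂gibbs
      = 1 - ∫ x, t x ∂gibbs + α ^ 2 / 8 * ∫ x, ‖x‖ ^ 4 ∂gibbs := by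
    rw [integral_add hA hit2, integral_sub (integrable_const (1:ℝ)) hit]
    have h2 : ∫ x, (t x) ^ 2 / 2 ∂gibbs = α ^ 2 / 8 * ∫ x, ‖x‖ ^ 4 ∂gibbs := by
      rw [← integral_const_mul]
      congr 1; funext x; simp only [ht_def]; ring
    rw [h2]
    simp
  have hlog : Real.log (Zα / Z) ≤ Zα / Z - 1 :=
    Real.log_le_sub_one_of_pos (div_pos hZαpos hZpos)
  have hZαZ : Zα / Z ≤ 1 - ∫ x, t x ∂gibbs + α ^ 2 / 8 * ∫ x, ‖x‖ ^ 4 ∂gibbs := by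
    rw [← key]; rw [hsplit] at hcomp; exact hcomp
  have hLHS : ∫ x, (Real.log (Zα / Z) + α / 2 * ‖x‖ ^ 2) ∂gibbs
      = Real.log (Zα / Z) + ∫ x, t x ∂gibbs := by
    rw [integral_add (integrable_const _) hit, integral_const]
    simp
  rw [hLHS]
  linarith
end

section
/- Let U : ℝ^d → ℝ be a C² convex function whose gradient ∇U is Lipschitz, and suppose there exist constants c̲ > 0 and r ∈ [0,1) such that for all x, the smallest eigenvalue of the Hessian satisfies λ_min(D²U(x)) ≥ c̲ · U(x)^{-r}, with U positive and minimized at a unique point x* with U(x*) = 1. Then for all x ∈ ℝ^d, |∇U(x)|² ≥ (2c̲/(1-r)) · (U(x)^{1-r} − U(x*)^{1-r}). -/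
open Real
open scoped RealInnerProductSpace

/-- Under the weakly convex parametric assumption `(H_r^1)` — `U` is `C²`, positive,
convex, with `L`-Lipschitz gradient, unique minimizer `x*` with `U(x*) = 1`, and
`λ_min(D²U(x)) ≥ c̲·U(x)^{-r}` — one has
`|∇U(x)|² ≥ (2c̲/(1-r))·(U(x)^{1-r} − U(x*)^{1-r})` for all `x`. -/
theorem grad_sq_lower_bound
    {d : ℕ} (hd : 1 ≤ d) (U : EuclideanSpace ℝ (Fin d) → ℝ)
    (hU : ContDiff ℝ 2 U) (hUpos : ∀ x, 0 < U x)
    (hconv : ConvexOn ℝ Set.univ U)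
    (L : ℝ) (hL : 0 < L) (hLip : LipschitzWith (Real.toNNReal L) (gradient U))
    (xstar : EuclideanSpace ℝ (Fin d))
    (hmin : ∀ x, U xstar ≤ U x)
    (hminUnique : ∀ x, U x = U xstar → x = xstar)
    (hstar : U xstar = 1)
    (c r : ℝ) (hc : 0 < c) (hr0 : 0 ≤ r) (hr1 : r < 1)
    (hHess : ∀ x v, c * U x ^ (-r) * ‖v‖ ^ 2 ≤ ⟪v, fderiv ℝ (gradient U) x v⟫) :
    ∀ x, 2 * c / (1 - r) * (U x ^ (1 - r) - U xstar ^ (1 - r)) ≤ ‖gradient U x‖ ^ 2 := by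
  have hr : (0:ℝ) < 1 - r := by linarith
  have hUdiff : Differentiable ℝ U := hU.differentiable (by norm_num)
  have hgradC : ContDiff ℝ 1 (gradient U) := by
    have h1 : ContDiff ℝ 1 (fderiv ℝ U) := hU.fderiv_right (by norm_num)
    have heq : gradient U = fun y =>
        (InnerProductSpace.toDual ℝ (EuclideanSpace ℝ (Fin d))).symm (fderiv ℝ U y) := rfl
    rw [heq]
    exact ((InnerProductSpace.toDual ℝ (EuclideanSpace ℝ (Fin d))).symm.contDiff).comp h1
  have hgraddiff : Differentiable ℝ (gradient U) := hgradC.differentiable (by norm_num)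
  have hgrad0 : gradient U xstar = 0 := by
    have hloc : IsLocalMin U xstar := Filter.Eventually.of_forall hmin
    have hf0 : fderiv ℝ U xstar = 0 := hloc.fderiv_eq_zero
    show (InnerProductSpace.toDual ℝ (EuclideanSpace ℝ (Fin d))).symm (fderiv ℝ U xstar) = 0
    rw [hf0]; simp
  intro x
  by_cases hx : x = xstar
  · subst hx
    simp only [sub_self, mul_zero]
    positivity
  set v := x - xstar with hvdef
  have hv : v ≠ 0 := sub_ne_zero.mpr hx
  have hv2 : (0:ℝ) < ‖v‖ ^ 2 := pow_pos (norm_pos_iff.mpr hv) 2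
  set γ : ℝ → EuclideanSpace ℝ (Fin d) := fun t => xstar + t • v with hγdef
  set f : ℝ → ℝ := fun t => U (γ t) with hfdef
  set h : ℝ → ℝ := fun t => ⟪v, gradient U (γ t)⟫ with hhdef
  set h' : ℝ → ℝ := fun t => ⟪v, fderiv ℝ (gradient U) (γ t) v⟫ with hh'def
  have hγ0 : γ 0 = xstar := by simp [hγdef]
  have hγ1 : γ 1 = x := by simp [hγdef, hvdef]
  have hfpos : ∀ t, 0 < f t := fun t => hUpos (γ t)
  have hγd : ∀ t : ℝ, HasDerivAt γ v t := by
    intro t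
    simpa [hγdef] using ((hasDerivAt_id t).smul_const v).const_add xstar
  have hfderiv : ∀ t, HasDerivAt f (h t) t := by
    intro t
    have hg : HasGradientAt U (gradient U (γ t)) (γ t) := (hUdiff (γ t)).hasGradientAt
    have h1 := hg.hasFDerivAt.comp_hasDerivAt t (hγd t)
    have h2 : h t = (InnerProductSpace.toDual ℝ (EuclideanSpace ℝ (Fin d))
        (gradient U (γ t))) v := by
      rw [InnerProductSpace.toDual_apply_apply]
      exact real_inner_comm _ _
    rw [h2]
    exact h1
  have hhderiv : ∀ t, HasDerivAt h (h' t) t := by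
    intro t
    have hgd : HasFDerivAt (gradient U) (fderiv ℝ (gradient U) (γ t)) (γ t) :=
      (hgraddiff (γ t)).hasFDerivAt
    have hcomp : HasDerivAt (fun s => gradient U (γ s)) (fderiv ℝ (gradient U) (γ t) v) t :=
      hgd.comp_hasDerivAt t (hγd t)
    have := (hasDerivAt_const t v).inner ℝ hcomp
    simpa [hhdef, hh'def] using this
  have hh'ge : ∀ t, c * f t ^ (-r) * ‖v‖ ^ 2 ≤ h' t := fun t => hHess (γ t) v
  have hh'nn : ∀ t, 0 ≤ h' t := by
    intro t
    refine le_trans ?_ (hh'ge t)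
    have := (hfpos t).le
    positivity
  have hmono : Monotone h := by
    apply monotone_of_deriv_nonneg (fun t => (hhderiv t).differentiableAt)
    intro t
    rw [(hhderiv t).deriv]
    exact hh'nn t
  have hzero : h 0 = 0 := by simp only [hhdef, hγ0, hgrad0, inner_zero_right]
  have hnn : ∀ t, 0 ≤ t → 0 ≤ h t := fun t ht => hzero ▸ hmono ht
  set K : ℝ := 2 * c / (1 - r) * ‖v‖ ^ 2 with hKdef
  have hK1 : K * (1 - r) = 2 * c * ‖v‖ ^ 2 := by
    rw [hKdef]
    field_simp
  set Φ : ℝ → ℝ := fun t => h t ^ 2 - K * f t ^ (1 - r) with hΦdef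
  have hψ : ∀ t, HasDerivAt (fun s => f s ^ (1 - r)) ((1 - r) * f t ^ (-r) * h t) t := by
    intro t
    have := (hfderiv t).rpow_const (p := 1 - r) (Or.inl (ne_of_gt (hfpos t)))
    rw [show (1 - r) - 1 = -r by ring] at this
    convert this using 1
    ring
  have hΦd : ∀ t, HasDerivAt Φ (2 * h t * h' t - K * ((1 - r) * f t ^ (-r) * h t)) t := by
    intro t
    have h1 : HasDerivAt (fun s => h s ^ 2) (2 * h t ^ 1 * h' t) t := (hhderiv t).pow 2
    have h2 := (hψ t).const_mul K
    have h3 := h1.sub h2; simp only [pow_one] at h3; exact h3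
  have hΦmono : MonotoneOn Φ (Set.Icc (0:ℝ) 1) := by
    apply monotoneOn_of_deriv_nonneg (convex_Icc 0 1)
    · exact (Differentiable.continuous (fun t => (hΦd t).differentiableAt)).continuousOn
    · exact fun t _ => ((hΦd t).differentiableAt).differentiableWithinAt
    · intro t ht
      rw [(hΦd t).deriv]
      rw [interior_Icc] at ht
      have hh0 : 0 ≤ h t := hnn t ht.1.le
      have hge := hh'ge t
      have heq : K * ((1 - r) * f t ^ (-r) * h t)
          = (2 * h t) * (c * f t ^ (-r) * ‖v‖ ^ 2) := by
        calc K * ((1 - r) * f t ^ (-r) * h t)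
            = (K * (1 - r)) * (f t ^ (-r) * h t) := by ring
          _ = (2 * c * ‖v‖ ^ 2) * (f t ^ (-r) * h t) := by rw [hK1]
          _ = (2 * h t) * (c * f t ^ (-r) * ‖v‖ ^ 2) := by ring
      have hmul := mul_le_mul_of_nonneg_left hge (by linarith : (0:ℝ) ≤ 2 * h t)
      linarith
  have hΦle : Φ 0 ≤ Φ 1 := hΦmono (by norm_num) (by norm_num) (by norm_num)
  have hf0 : f 0 = U xstar := by simp only [hfdef]; rw [hγ0]
  have hf1 : f 1 = U x := by simp only [hfdef]; rw [hγ1]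
  have hΦ0 : Φ 0 = -(K * U xstar ^ (1 - r)) := by
    simp only [hΦdef]; rw [hzero, hf0]; ring
  have hΦ1 : Φ 1 = h 1 ^ 2 - K * U x ^ (1 - r) := by
    simp only [hΦdef]; rw [hf1]
  have hcs : h 1 ^ 2 ≤ ‖v‖ ^ 2 * ‖gradient U x‖ ^ 2 := by
    have habs : |h 1| ≤ ‖v‖ * ‖gradient U (γ 1)‖ :=
      abs_real_inner_le_norm v (gradient U (γ 1))
    rw [hγ1] at habs
    calc h 1 ^ 2 = |h 1| ^ 2 := (sq_abs _).symm
      _ ≤ (‖v‖ * ‖gradient U x‖) ^ 2 := by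
          exact pow_le_pow_left₀ (abs_nonneg _) habs 2
      _ = ‖v‖ ^ 2 * ‖gradient U x‖ ^ 2 := by ring
  have hkey : K * (U x ^ (1 - r) - U xstar ^ (1 - r)) ≤ ‖v‖ ^ 2 * ‖gradient U x‖ ^ 2 := by
    rw [hΦ0, hΦ1] at hΦle
    nlinarith
  have : 2 * c / (1 - r) * (U x ^ (1 - r) - U xstar ^ (1 - r)) * ‖v‖ ^ 2 ≤
      ‖gradient U x‖ ^ 2 * ‖v‖ ^ 2 := by
    calc 2 * c / (1 - r) * (U x ^ (1 - r) - U xstar ^ (1 - r)) * ‖v‖ ^ 2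
        = K * (U x ^ (1 - r) - U xstar ^ (1 - r)) := by rw [hKdef]; ring
      _ ≤ ‖v‖ ^ 2 * ‖gradient U x‖ ^ 2 := hkey
      _ = ‖gradient U x‖ ^ 2 * ‖v‖ ^ 2 := by ring
  exact le_of_mul_le_mul_right this hv2
end

section
/- Let U : ℝ^d → ℝ be a C² convex function such that for all x the largest eigenvalue of D²U(x) is at most c̄ · U(x)^{-r}, where c̄ > 0, r ∈ [0,1), and U is positive with unique minimizer x* and U(x*) = 1. Then for all x ∈ ℝ^d, |∇U(x)|² ≤ (2c̄/(1-r)) · U(x)^{1-r}. In particular the function x ↦ √(U(x)) is Lipschitz with constant √(c̄/(2(1-r))). -/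
open Real
open scoped RealInnerProductSpace

/-- One-dimensional core lemma: if `s > 0`, `s' = -h`, `h' = -q`, `q ≤ c̄ s^{-r}`,
`h` antitone (i.e. `s` convex), `0 ≤ h 0`, then `h 0 ^ 2 ≤ (2c̄/(1-r)) s 0 ^ (1-r)`. -/
theorem oneD_energy_bound (s h q : ℝ → ℝ) (cbar r : ℝ) (hc : 0 < cbar) (hr1 : r < 1)
    (hspos : ∀ t, 0 < s t)
    (hsder : ∀ t, HasDerivAt s (-(h t)) t)
    (hhder : ∀ t, HasDerivAt h (-(q t)) t)
    (hq : ∀ t, q t ≤ cbar * s t ^ (-r))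
    (hanti : Antitone h)
    (hh0 : 0 ≤ h 0) :
    h 0 ^ 2 ≤ 2 * cbar / (1 - r) * s 0 ^ (1 - r) := by
  have hr' : (0:ℝ) < 1 - r := by linarith
  set K : ℝ := 2 * cbar / (1 - r) with hK
  have hKpos : 0 < K := by positivity
  have hK2 : K * (1 - r) = 2 * cbar := by
    rw [hK]; field_simp
  set E : ℝ → ℝ := fun t => h t ^ 2 - K * s t ^ (1 - r) with hE
  set D : ℝ → ℝ := fun t =>
    2 * h t * (-(q t)) - K * ((1 - r) * s t ^ (1 - r - 1) * (-(h t))) with hD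
  have hEder : ∀ t, HasDerivAt E (D t) t := by
    intro t
    have e1 : HasDerivAt (fun τ => h τ ^ 2) ((2:ℕ) * h t ^ (2 - 1) * (-(q t))) t :=
      (hhder t).pow 2
    have e2 := (hsder t).rpow_const (p := 1 - r) (Or.inl (hspos t).ne')
    have := e1.sub (e2.const_mul K)
    refine this.congr_deriv ?_
    rw [hD]
    push_cast
    ring
  have hDpos : ∀ t, 0 ≤ h t → 0 ≤ D t := by
    intro t hh
    have hexp : (1:ℝ) - r - 1 = -r := by ring
    have hA : 0 < s t ^ (-r) := Real.rpow_pos_of_pos (hspos t) _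
    have hqt := hq t
    have hprod : 0 ≤ (cbar * s t ^ (-r) - q t) * h t :=
      mul_nonneg (sub_nonneg.2 hqt) hh
    have : D t = 2 * ((cbar * s t ^ (-r) - q t) * h t)
        + (K * (1 - r) - 2 * cbar) * (s t ^ (-r) * h t) := by
      rw [hD]; simp only [hexp]; ring
    rw [this, hK2]
    nlinarith
  have hEdiff : Differentiable ℝ E := fun t => (hEder t).differentiableAt
  have hEmono : ∀ a b : ℝ, a ≤ b → (∀ t ∈ Set.Icc a b, 0 ≤ h t) → E a ≤ E b := by
    intro a b hab hh
    have := monotoneOn_of_deriv_nonneg (convex_Icc a b) hEdiff.continuous.continuousOn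
      hEdiff.differentiableOn (fun t ht => by
        rw [(hEder t).deriv]
        exact hDpos t (hh t (Set.mem_of_mem_of_subset ht
          (by rw [interior_Icc]; exact Set.Ioo_subset_Icc_self))))
    exact this (Set.left_mem_Icc.2 hab) (Set.right_mem_Icc.2 hab) hab
  have hhcont : Continuous h := by
    have : Differentiable ℝ h := fun t => (hhder t).differentiableAt
    exact this.continuous
  by_cases hex : ∃ t, 0 ≤ t ∧ h t ≤ 0
  · obtain ⟨t₁, ht₁, hht₁⟩ := hex
    have hiv : (0:ℝ) ∈ Set.Icc (h t₁) (h 0) := ⟨hht₁, hh0⟩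
    obtain ⟨t₀, ht₀mem, ht₀⟩ := intermediate_value_Icc' ht₁ hhcont.continuousOn hiv
    have hE0 : E 0 ≤ E t₀ := by
      apply hEmono 0 t₀ ht₀mem.1
      intro t ht
      have := hanti ht.2
      rw [ht₀] at this
      exact this
    have hEt₀ : E t₀ ≤ 0 := by
      have : 0 < K * s t₀ ^ (1 - r) :=
        mul_pos hKpos (Real.rpow_pos_of_pos (hspos t₀) _)
      simp only [hE, ht₀]
      nlinarith
    have : h 0 ^ 2 - K * s 0 ^ (1 - r) ≤ 0 := le_trans hE0 hEt₀
    linarith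
  · push_neg at hex
    by_contra hlt
    push_neg at hlt
    have hE0pos : 0 < h 0 ^ 2 - K * s 0 ^ (1 - r) := by linarith
    set ε : ℝ := Real.sqrt (h 0 ^ 2 - K * s 0 ^ (1 - r)) with hεdef
    have hε : 0 < ε := Real.sqrt_pos.2 hE0pos
    have hε2 : ε ^ 2 = h 0 ^ 2 - K * s 0 ^ (1 - r) := Real.sq_sqrt hE0pos.le
    set T : ℝ := s 0 / ε with hT
    have hT0 : 0 ≤ T := div_nonneg (hspos 0).le hε.le
    have hhb : ∀ t ∈ Set.Icc (0:ℝ) T, ε ≤ h t := by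
      intro t ht
      have h1 : E 0 ≤ E t :=
        hEmono 0 t ht.1 (fun τ hτ => (hex τ hτ.1).le)
      have h2 : 0 < K * s t ^ (1 - r) :=
        mul_pos hKpos (Real.rpow_pos_of_pos (hspos t) _)
      have h3 : ε ^ 2 ≤ h t ^ 2 := by
        simp only [hE] at h1
        nlinarith
      have h4 : 0 < h t := hex t ht.1
      nlinarith
    set F : ℝ → ℝ := fun t => s t + ε * t with hF
    have hFder : ∀ t, HasDerivAt F (-(h t) + ε) t := by
      intro t
      have h2 : HasDerivAt (fun τ : ℝ => ε * τ) ε t := by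
        simpa using (hasDerivAt_id t).const_mul ε
      exact (hsder t).add h2
    have hFdiff : Differentiable ℝ F := fun t => (hFder t).differentiableAt
    have hFanti : AntitoneOn F (Set.Icc 0 T) := by
      apply antitoneOn_of_deriv_nonpos (convex_Icc 0 T) hFdiff.continuous.continuousOn
        hFdiff.differentiableOn
      intro t ht
      rw [interior_Icc] at ht
      rw [(hFder t).deriv]
      have := hhb t (Set.Ioo_subset_Icc_self ht)
      linarith
    have hFT : F T ≤ F 0 :=
      hFanti (Set.left_mem_Icc.2 hT0) (Set.right_mem_Icc.2 hT0) hT0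
    have hεT : ε * T = s 0 := by
      rw [hT]; field_simp
    have : s T ≤ 0 := by
      simp only [hF] at hFT
      rw [hεT] at hFT
      simp at hFT
      linarith
    exact absurd this (not_le.2 (hspos T))

/-- If `U` is `C²`, positive, convex, with unique minimizer `x*`, `U(x*) = 1`, and
`λ_max(D²U(x)) ≤ c̄·U(x)^{-r}`, then `|∇U(x)|² ≤ (2c̄/(1-r))·U(x)^{1-r}`; in particular
`√U` is Lipschitz with constant `√(c̄/(2(1-r)))`. -/
theorem grad_sq_upper_bound_and_sqrt_lipschitz
    {d : ℕ} (hd : 1 ≤ d) (U : EuclideanSpace ℝ (Fin d) → ℝ)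
    (hU : ContDiff ℝ 2 U) (hUpos : ∀ x, 0 < U x)
    (hconv : ConvexOn ℝ Set.univ U)
    (xstar : EuclideanSpace ℝ (Fin d))
    (hmin : ∀ x, U xstar ≤ U x)
    (hminUnique : ∀ x, U x = U xstar → x = xstar)
    (hcrit : gradient U xstar = 0)
    (hstar : U xstar = 1)
    (cbar r : ℝ) (hc : 0 < cbar) (hr0 : 0 ≤ r) (hr1 : r < 1)
    (hHess : ∀ x v, ⟪v, fderiv ℝ (gradient U) x v⟫ ≤ cbar * U x ^ (-r) * ‖v‖ ^ 2) :
    (∀ x, ‖gradient U x‖ ^ 2 ≤ 2 * cbar / (1 - r) * U x ^ (1 - r)) ∧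
      LipschitzWith (Real.toNNReal (Real.sqrt (cbar / (2 * (1 - r)))))
        (fun x => Real.sqrt (U x)) := by
  have hr' : (0:ℝ) < 1 - r := by linarith
  have hUdiff : Differentiable ℝ U := hU.differentiable (by norm_num)
  have hGdiff : Differentiable ℝ (gradient U) := by
    have h1 : ContDiff ℝ 1 (fderiv ℝ U) := hU.fderiv_right (by norm_num)
    have h2 : ContDiff ℝ 1 (fun y =>
        (InnerProductSpace.toDual ℝ (EuclideanSpace ℝ (Fin d))).symm (fderiv ℝ U y)) :=
      (InnerProductSpace.toDual ℝ (EuclideanSpace ℝ (Fin d))).symm.contDiff.comp h1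
    exact h2.differentiable one_ne_zero
  have key : ∀ x, ‖gradient U x‖ ^ 2 ≤ 2 * cbar / (1 - r) * U x ^ (1 - r) := by
    intro x
    by_cases hg0 : gradient U x = 0
    · rw [hg0]
      have : 0 < 2 * cbar / (1 - r) * U x ^ (1 - r) :=
        mul_pos (by positivity) (Real.rpow_pos_of_pos (hUpos x) _)
      simpa using this.le
    set g : EuclideanSpace ℝ (Fin d) := gradient U x with hg
    set u : EuclideanSpace ℝ (Fin d) := ‖g‖⁻¹ • g with hudef
    have hu : ‖u‖ = 1 := norm_smul_inv_norm hg0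
    set c : ℝ → EuclideanSpace ℝ (Fin d) := fun t => x - t • u with hcdef
    have hcder : ∀ t, HasDerivAt c (-u) t := by
      intro t
      have := ((hasDerivAt_id t).smul_const u).const_sub x
      simpa using this
    set s : ℝ → ℝ := fun t => U (c t) with hsdef
    set h : ℝ → ℝ := fun t => ⟪u, gradient U (c t)⟫ with hhdef
    set q : ℝ → ℝ := fun t => ⟪u, fderiv ℝ (gradient U) (c t) u⟫ with hqdef
    have hspos : ∀ t, 0 < s t := fun t => hUpos _
    have hsder : ∀ t, HasDerivAt s (-(h t)) t := by
      intro t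
      have hf := (hUdiff (c t)).hasGradientAt.hasFDerivAt
      have h2 := hf.comp_hasDerivAt t (hcder t)
      have h3 : ((InnerProductSpace.toDual ℝ (EuclideanSpace ℝ (Fin d)))
          (gradient U (c t))) (-u) = -(h t) := by
        rw [InnerProductSpace.toDual_apply_apply, inner_neg_right, real_inner_comm]
      rw [h3] at h2
      exact h2
    have hhder : ∀ t, HasDerivAt h (-(q t)) t := by
      intro t
      have hf := (hGdiff (c t)).hasFDerivAt
      have h2 := hf.comp_hasDerivAt t (hcder t)
      have h3 := (hasDerivAt_const t u).inner ℝ h2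
      have h4 : ⟪u, (fderiv ℝ (gradient U) (c t)) (-u)⟫
          + ⟪(0 : EuclideanSpace ℝ (Fin d)), gradient U (c t)⟫ = -(q t) := by
        rw [map_neg, inner_neg_right, inner_zero_left, add_zero]
      simp only [Function.comp_apply] at h3
      rw [h4] at h3
      exact h3
    have hq : ∀ t, q t ≤ cbar * s t ^ (-r) := by
      intro t
      have := hHess (c t) u
      rw [hu] at this
      simpa using this
    have hsconv : ConvexOn ℝ Set.univ s := by
      have h0 : s = U ∘ (AffineMap.lineMap x (x - u) : ℝ →ᵃ[ℝ] EuclideanSpace ℝ (Fin d)) := by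
        funext t
        simp only [hsdef, hcdef, Function.comp_apply, AffineMap.lineMap_apply,
          vsub_eq_sub, vadd_eq_add]
        congr 1
        module
      rw [h0]
      have := hconv.comp_affineMap (AffineMap.lineMap x (x - u) : ℝ →ᵃ[ℝ] EuclideanSpace ℝ (Fin d))
      simpa using this
    have hanti : Antitone h := by
      intro a b hab
      rcases hab.eq_or_lt with rfl | hab'
      · exact le_refl _
      have h1 := hsconv.le_slope_of_hasDerivAt (Set.mem_univ a) (Set.mem_univ b) hab' (hsder a)
      have h2 := hsconv.slope_le_of_hasDerivAt (Set.mem_univ a) (Set.mem_univ b) hab' (hsder b)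
      linarith
    have hc0 : c 0 = x := by simp [hcdef]
    have hh0 : h 0 = ‖g‖ := by
      rw [hhdef]
      simp only [hc0, ← hg, hudef]
      rw [real_inner_smul_left, real_inner_self_eq_norm_sq]
      have : ‖g‖ ≠ 0 := norm_ne_zero_iff.2 hg0
      field_simp
    have hmain := oneD_energy_bound s h q cbar r hc hr1 hspos hsder hhder hq hanti
      (by rw [hh0]; exact norm_nonneg g)
    rw [hh0] at hmain
    have hs0 : s 0 = U x := by rw [show s 0 = U (c 0) from rfl, hc0]
    rw [hs0] at hmain
    exact hmain
  refine ⟨key, ?_⟩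
  have hfd : ∀ x, HasFDerivAt (fun y => Real.sqrt (U y))
      ((1 / (2 * Real.sqrt (U x))) • fderiv ℝ U x) x := by
    intro x
    exact (Real.hasDerivAt_sqrt (hUpos x).ne').comp_hasFDerivAt x (hUdiff x).hasFDerivAt
  apply lipschitzWith_of_nnnorm_fderiv_le (𝕜 := ℝ) (fun x => (hfd x).differentiableAt)
  intro x
  rw [← NNReal.coe_le_coe, coe_nnnorm, Real.coe_toNNReal _ (Real.sqrt_nonneg _)]
  rw [(hfd x).fderiv]
  rw [norm_smul]
  have hU1 : 1 ≤ U x := hstar ▸ hmin x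
  have hsq : 0 < Real.sqrt (U x) := Real.sqrt_pos.2 (hUpos x)
  have hnf : ‖fderiv ℝ U x‖ = ‖gradient U x‖ := by
    have : gradient U x
        = (InnerProductSpace.toDual ℝ (EuclideanSpace ℝ (Fin d))).symm (fderiv ℝ U x) := rfl
    rw [this, LinearIsometryEquiv.norm_map]
  rw [hnf]
  have hpos1 : (0:ℝ) < 1 / (2 * Real.sqrt (U x)) := by positivity
  rw [Real.norm_eq_abs, abs_of_pos hpos1]
  rw [Real.le_sqrt (by positivity) (by positivity)]
  have e : Real.sqrt (U x) ^ 2 = U x := Real.sq_sqrt (hUpos x).le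
  have hlhs : (1 / (2 * Real.sqrt (U x)) * ‖gradient U x‖) ^ 2
      = ‖gradient U x‖ ^ 2 / (4 * U x) := by
    rw [mul_pow, div_pow, mul_pow, e]
    ring
  rw [hlhs]
  have hrp : U x ^ (1 - r) ≤ U x := by
    have := Real.rpow_le_rpow_of_exponent_le hU1 (by linarith : 1 - r ≤ 1)
    rwa [Real.rpow_one] at this
  have hg2 : ‖gradient U x‖ ^ 2 ≤ 2 * cbar / (1 - r) * U x :=
    le_trans (key x) (by
      apply mul_le_mul_of_nonneg_left hrp
      positivity)
  rw [div_le_div_iff₀ (by positivity) (by positivity)]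
  have hfe : 2 * cbar / (1 - r) * (1 - r) = 2 * cbar := by field_simp
  nlinarith [hUpos x, norm_nonneg (gradient U x)]
end

section
/- Let V be a nonnegative random variable satisfying E[e^{θV}] < e^a + ρ e^b for some positive constants θ, a, ρ, b with ρ ≥ 1. Then for any p ≥ 1, E[V^p] ≤ θ^{-p} (p − 1 + a + b + log(2ρ))^p. -/
open MeasureTheory Real

private lemma G_anti (p : ℝ) (hp : 1 ≤ p) :
    AntitoneOn (fun t : ℝ => t ^ (p-1) * Real.exp (-t)) (Set.Ici (p-1)) := by
  have h1 : (0:ℝ) ≤ p - 1 := by linarith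
  apply antitoneOn_of_deriv_nonpos (convex_Ici _)
  · apply ContinuousOn.mul _ (Real.continuous_exp.comp continuous_neg).continuousOn
    intro t ht
    exact (Real.continuousAt_rpow_const t (p-1) (Or.inr h1)).continuousWithinAt
  · intro t ht
    rw [interior_Ici] at ht
    have ht0 : 0 < t := lt_of_le_of_lt h1 ht
    have hexp : HasDerivAt (fun t : ℝ => Real.exp (-t)) (-Real.exp (-t)) t := by
      simpa using (hasDerivAt_neg t).exp
    have hpow : HasDerivAt (fun t : ℝ => t ^ (p-1)) ((p-1) * t ^ (p-1-1)) t :=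
      Real.hasDerivAt_rpow_const (Or.inl ht0.ne')
    exact ((hpow.mul hexp).differentiableAt).differentiableWithinAt
  · intro t ht
    rw [interior_Ici] at ht
    have ht0 : 0 < t := lt_of_le_of_lt h1 ht
    have hexp : HasDerivAt (fun t : ℝ => Real.exp (-t)) (-Real.exp (-t)) t := by
      simpa using (hasDerivAt_neg t).exp
    have hpow : HasDerivAt (fun t : ℝ => t ^ (p-1)) ((p-1) * t ^ (p-1-1)) t :=
      Real.hasDerivAt_rpow_const (Or.inl ht0.ne')
    have hd : deriv (fun t : ℝ => t ^ (p-1) * Real.exp (-t)) t = _ := (hpow.mul hexp).deriv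
    rw [hd]
    have h2 : (p-1) * t ^ (p-1-1) ≤ t ^ (p-1) := by
      have : t ^ (p-1-1) * t = t ^ (p-1) := by
        rw [← Real.rpow_add_one ht0.ne']
        ring_nf
      calc (p-1) * t ^ (p-1-1) ≤ t * t ^ (p-1-1) := by
            apply mul_le_mul_of_nonneg_right (le_of_lt ht) (Real.rpow_nonneg ht0.le _)
        _ = t ^ (p-1) := by rw [mul_comm]; exact this
    have hepos : 0 < Real.exp (-t) := Real.exp_pos _
    nlinarith [Real.rpow_nonneg ht0.le (p-1), Real.rpow_nonneg ht0.le (p-1-1)]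


private lemma key_ineq (p : ℝ) (hp : 1 ≤ p) (K : ℝ) (hK : p - 1 < K) (u : ℝ) (hu : p - 1 ≤ u) :
    u ^ p ≤ K ^ p + p * K ^ (p-1) * (Real.exp (u - K) - 1) := by
  have h1 : (0:ℝ) ≤ p - 1 := by linarith
  have hK0 : 0 < K := lt_of_le_of_lt h1 hK
  set F : ℝ → ℝ := fun u => K ^ p + p * K ^ (p-1) * (Real.exp (u - K) - 1) - u ^ p with hF
  have hFK : F K = 0 := by simp [hF]
  -- derivative of F
  have hderiv : ∀ t ∈ Set.Ioi (p-1), HasDerivAt F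
      (p * Real.exp t * (K ^ (p-1) * Real.exp (-K) - t ^ (p-1) * Real.exp (-t))) t := by
    intro t ht
    have ht0 : 0 < t := lt_of_le_of_lt h1 ht
    have hexp : HasDerivAt (fun t : ℝ => Real.exp (t - K)) (Real.exp (t - K)) t := by
      simpa using ((hasDerivAt_id' t).sub_const K).exp
    have hpow : HasDerivAt (fun t : ℝ => t ^ p) (p * t ^ (p-1)) t :=
      Real.hasDerivAt_rpow_const (Or.inl ht0.ne')
    have h : HasDerivAt F (p * K ^ (p-1) * Real.exp (t - K) - p * t ^ (p-1)) t := (((hexp.sub_const 1).const_mul (p * K ^ (p-1))).const_add (K ^ p)).sub hpow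
    convert h using 1
    rw [Real.exp_sub, Real.exp_neg, Real.exp_neg]
    field_simp
  -- sign of the derivative
  have hGa := G_anti p hp
  rcases le_total u K with hcase | hcase
  · -- F antitone on [p-1, K]
    have hanti : AntitoneOn F (Set.Icc (p-1) K) := by
      apply antitoneOn_of_deriv_nonpos (convex_Icc _ _)
      · apply ContinuousOn.sub (ContinuousOn.add continuousOn_const (by fun_prop))
        intro t ht
        exact (Real.continuousAt_rpow_const t p (Or.inr (by linarith))).continuousWithinAt
      · intro t ht
        rw [interior_Icc] at ht
        exact (hderiv t ht.1).differentiableAt.differentiableWithinAt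
      · intro t ht
        rw [interior_Icc] at ht
        rw [(hderiv t ht.1).deriv]
        have hG : K ^ (p-1) * Real.exp (-K) ≤ t ^ (p-1) * Real.exp (-t) :=
          hGa (Set.mem_Ici.mpr ht.1.le) (Set.mem_Ici.mpr hK.le) ht.2.le
        have h3 : (0:ℝ) ≤ p * Real.exp t := by positivity
        nlinarith [mul_nonneg h3 (sub_nonneg.mpr hG)]
    have := hanti (Set.mem_Icc.mpr ⟨hu, hcase⟩) (Set.mem_Icc.mpr ⟨hK.le, le_refl K⟩) hcase
    rw [hFK] at this
    simpa [hF] using this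
  · -- F monotone on [K, ∞)
    have hmono : MonotoneOn F (Set.Ici K) := by
      apply monotoneOn_of_deriv_nonneg (convex_Ici _)
      · apply ContinuousOn.sub (ContinuousOn.add continuousOn_const (by fun_prop))
        intro t ht
        exact (Real.continuousAt_rpow_const t p (Or.inr (by linarith))).continuousWithinAt
      · intro t ht
        rw [interior_Ici] at ht
        exact (hderiv t (lt_trans hK ht)).differentiableAt.differentiableWithinAt
      · intro t ht
        rw [interior_Ici] at ht
        rw [(hderiv t (lt_trans hK ht)).deriv]
        have hG : t ^ (p-1) * Real.exp (-t) ≤ K ^ (p-1) * Real.exp (-K) :=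
          hGa (Set.mem_Ici.mpr hK.le) (Set.mem_Ici.mpr (le_trans hK.le ht.le)) ht.le
        have h3 : (0:ℝ) ≤ p * Real.exp t := by positivity
        nlinarith [mul_nonneg h3 (sub_nonneg.mpr hG)]
    have := hmono (Set.mem_Ici.mpr (le_refl K)) (Set.mem_Ici.mpr hcase) hcase
    rw [hFK] at this
    simpa [hF] using this

theorem moment_bound_from_exponential_moment
    {Ω : Type*} [MeasurableSpace Ω] (μ : Measure Ω) [IsProbabilityMeasure μ]
    (V : Ω → ℝ) (hVmeas : Measurable V) (hVnonneg : ∀ ω, 0 ≤ V ω)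
    (θ a ρ b : ℝ) (hθ : 0 < θ) (ha : 0 < a) (hb : 0 < b) (hρ : 1 ≤ ρ)
    (hexpInt : Integrable (fun ω => Real.exp (θ * V ω)) μ)
    (hexp : ∫ ω, Real.exp (θ * V ω) ∂μ < Real.exp a + ρ * Real.exp b)
    (p : ℝ) (hp : 1 ≤ p)
    (hpInt : Integrable (fun ω => V ω ^ p) μ) :
    ∫ ω, V ω ^ p ∂μ ≤ θ ^ (-p) * (p - 1 + a + b + Real.log (2 * ρ)) ^ p := by
  set C : ℝ := a + b + Real.log (2 * ρ) with hCdef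
  have h2ρ : (0:ℝ) < 2 * ρ := by linarith
  have hlog : 0 ≤ Real.log (2 * ρ) := Real.log_nonneg (by linarith)
  have hC : 0 < C := by simp only [hCdef]; linarith
  set K : ℝ := p - 1 + C with hKdef
  have hK : p - 1 < K := by simp only [hKdef]; linarith
  have hK0 : 0 < K := by linarith
  have hKp1 : 0 ≤ p * K ^ (p-1) := by positivity
  -- pointwise bound
  have hpoint : ∀ ω, θ ^ p * V ω ^ p ≤
      K ^ p + p * K ^ (p-1) * (Real.exp (-C) * Real.exp (θ * V ω) - 1) := by
    intro ω
    have hV := hVnonneg ω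
    have hθV : 0 ≤ θ * V ω := mul_nonneg hθ.le hV
    have h1 : θ ^ p * V ω ^ p = (θ * V ω) ^ p := (Real.mul_rpow hθ.le hV).symm
    have h2 : (θ * V ω) ^ p ≤ (p - 1 + θ * V ω) ^ p :=
      Real.rpow_le_rpow hθV (by linarith) (by linarith)
    have h3 := key_ineq p hp K hK (p - 1 + θ * V ω) (by linarith)
    have h4 : Real.exp (p - 1 + θ * V ω - K) = Real.exp (-C) * Real.exp (θ * V ω) := by
      rw [← Real.exp_add]
      congr 1
      simp only [hKdef]; ring
    rw [h4] at h3
    linarith [h1 ▸ h2]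
  have hint1 : Integrable (fun ω => Real.exp (-C) * Real.exp (θ * V ω) - 1) μ :=
    (hexpInt.const_mul _).sub (integrable_const 1)
  have hint2 : Integrable
      (fun ω => p * K ^ (p-1) * (Real.exp (-C) * Real.exp (θ * V ω) - 1)) μ :=
    hint1.const_mul _
  have hRint : Integrable
      (fun ω => K ^ p + p * K ^ (p-1) * (Real.exp (-C) * Real.exp (θ * V ω) - 1)) μ :=
    (integrable_const _).add hint2
  have hLint : Integrable (fun ω => θ ^ p * V ω ^ p) μ := hpInt.const_mul _
  have hmono := integral_mono hLint hRint hpoint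
  rw [integral_const_mul] at hmono
  have h7 : ∫ ω, (Real.exp (-C) * Real.exp (θ * V ω) - 1) ∂μ
      = Real.exp (-C) * (∫ ω, Real.exp (θ * V ω) ∂μ) - 1 := by
    rw [integral_sub (hexpInt.const_mul _) (integrable_const 1),
      integral_const_mul, integral_const]
    simp
  have hRval : ∫ ω, (K ^ p + p * K ^ (p-1) * (Real.exp (-C) * Real.exp (θ * V ω) - 1)) ∂μ
      = K ^ p + p * K ^ (p-1) * (Real.exp (-C) * (∫ ω, Real.exp (θ * V ω) ∂μ) - 1) := by
    rw [integral_add (integrable_const _) hint2, integral_const_mul, h7, integral_const]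
    simp
  rw [hRval] at hmono
  -- bound the exponential moment by exp C
  have hexpC : ∫ ω, Real.exp (θ * V ω) ∂μ ≤ Real.exp C := by
    have h5 : Real.exp C = Real.exp a * Real.exp b * (2 * ρ) := by
      rw [hCdef, Real.exp_add, Real.exp_add, Real.exp_log h2ρ]
    have e2 : Real.exp a ≤ ρ * Real.exp a * Real.exp b := by
      nlinarith [mul_nonneg (by positivity : (0:ℝ) ≤ ρ * Real.exp a)
          (sub_nonneg.mpr (Real.one_le_exp hb.le)),
        mul_nonneg (sub_nonneg.mpr hρ) (Real.exp_pos a).le]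
    have e3 : ρ * Real.exp b ≤ ρ * Real.exp a * Real.exp b := by
      nlinarith [mul_nonneg (by positivity : (0:ℝ) ≤ ρ * Real.exp b)
          (sub_nonneg.mpr (Real.one_le_exp ha.le))]
    linarith
  have hfac : Real.exp (-C) * (∫ ω, Real.exp (θ * V ω) ∂μ) - 1 ≤ 0 := by
    have := Real.exp_pos (-C)
    have h6 : Real.exp (-C) * Real.exp C = 1 := by rw [← Real.exp_add]; simp
    nlinarith
  have hmain : θ ^ p * ∫ ω, V ω ^ p ∂μ ≤ K ^ p := by
    nlinarith [mul_nonneg hKp1 (neg_nonneg.mpr hfac)]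
  have hθp : 0 < θ ^ p := Real.rpow_pos_of_pos hθ p
  rw [Real.rpow_neg hθ.le]
  have hgoal : ∫ ω, V ω ^ p ∂μ ≤ (θ ^ p)⁻¹ * K ^ p := by
    rw [inv_mul_eq_div, le_div_iff₀ hθp]
    nlinarith
  convert hgoal using 3
  simp only [hKdef, hCdef]; ring
end

section
/- Let U : ℝ^d → ℝ be C² and convex with λ_min(D²U(x)) ≥ 0 for all x, and step γ ∈ (0, 1/L] where ∇U is L-Lipschitz. For the coupled Euler schemes X̄^x_{nγ}, X̄^y_{nγ} driven by the same Gaussian innovations and started at x, y, one has the pointwise bound |X̄^x_{nγ} − X̄^y_{nγ}|² ≤ |x − y|² ∫_0^1 exp( −2γ Σ_{i=0}^{n-1} λ_min( D²U( X̄^{λx + (1−λ)y}_{iγ} ) ) ) dλ. -/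
set_option maxHeartbeats 1000000


open Real
open scoped RealInnerProductSpace

private lemma contraction_of_symm {E : Type*} [NormedAddCommGroup E] [InnerProductSpace ℝ E]
    (A : E →L[ℝ] E) (c : ℝ) (hc : 0 ≤ c)
    (hsym : ∀ u v : E, ⟪A u, v⟫ = ⟪u, A v⟫)
    (hpsd : ∀ v : E, 0 ≤ ⟪v, A v⟫)
    (hub : ∀ v : E, ⟪v, A v⟫ ≤ c * ‖v‖ ^ 2) (v : E) :
    ‖A v‖ ≤ c * ‖v‖ := by
  have CS : ∀ u w : E, ⟪u, A w⟫ ^ 2 ≤ ⟪u, A u⟫ * ⟪w, A w⟫ := by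
    intro u w
    have hq : ∀ t : ℝ, 0 ≤ ⟪w, A w⟫ * t ^ 2 + (2 * ⟪u, A w⟫) * t + ⟪u, A u⟫ := by
      intro t
      have h0 := hpsd (u + t • w)
      have hswap : ⟪w, A u⟫ = ⟪u, A w⟫ := by
        rw [← hsym u w, real_inner_comm]
      simp only [map_add, map_smul, inner_add_left, inner_add_right, real_inner_smul_left,
        real_inner_smul_right, hswap] at h0
      nlinarith [h0]
    have hq' : ∀ t : ℝ, 0 ≤ ⟪w, A w⟫ * (t * t) + (2 * ⟪u, A w⟫) * t + ⟪u, A u⟫ := by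
      intro t; have := hq t; nlinarith [this]
    have hd := discrim_le_zero hq'
    simp only [discrim] at hd
    nlinarith [hd]
  have h1 : ⟪v, A (A v)⟫ = ‖A v‖ ^ 2 := by
    rw [← hsym v (A v), real_inner_self_eq_norm_sq]
  have h2 := CS v (A v)
  rw [h1] at h2
  have h3 : ⟪A v, A (A v)⟫ ≤ c * ‖A v‖ ^ 2 := hub (A v)
  have h4 : ⟪v, A v⟫ ≤ c * ‖v‖ ^ 2 := hub v
  have h5 : 0 ≤ ⟪v, A v⟫ := hpsd v
  have h6 : 0 ≤ ⟪A v, A (A v)⟫ := hpsd (A v)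
  have h7 : ⟪v, A v⟫ * ⟪A v, A (A v)⟫ ≤ (c * ‖v‖ ^ 2) * (c * ‖A v‖ ^ 2) :=
    mul_le_mul h4 h3 h6 (by positivity)
  rcases eq_or_lt_of_le (norm_nonneg (A v)) with h | h
  · rw [← h]; positivity
  · have hsq : ‖A v‖ ^ 2 ≤ (c * ‖v‖) ^ 2 := by nlinarith [h7, h2, mul_pos h h]
    nlinarith [hsq, h, mul_nonneg hc (norm_nonneg v)]

private lemma grad_contDiff' {d : ℕ} (U : EuclideanSpace ℝ (Fin d) → ℝ) (hU : ContDiff ℝ 2 U) :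
    ContDiff ℝ 1 (gradient U) := by
  have h1 : ContDiff ℝ 1 (fderiv ℝ U) := hU.fderiv_right (by norm_num)
  exact (InnerProductSpace.toDual ℝ (EuclideanSpace ℝ (Fin d))).symm.contDiff.comp h1

private lemma hess_symm' {d : ℕ} (U : EuclideanSpace ℝ (Fin d) → ℝ) (hU : ContDiff ℝ 2 U)
    (H : EuclideanSpace ℝ (Fin d) → (EuclideanSpace ℝ (Fin d) →L[ℝ] EuclideanSpace ℝ (Fin d)))
    (hH : ∀ z, HasFDerivAt (gradient U) (H z) z) (z u v : EuclideanSpace ℝ (Fin d)) :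
    ⟪u, H z v⟫ = ⟪v, H z u⟫ := by
  have h1 : ContDiff ℝ 1 (fderiv ℝ U) := hU.fderiv_right (by norm_num)
  have hfun : ∀ u : EuclideanSpace ℝ (Fin d),
      (fun w => ⟪u, gradient U w⟫) = fun w => fderiv ℝ U w u := by
    intro u
    funext w
    rw [real_inner_comm]
    exact InnerProductSpace.toDual_symm_apply
  have hkey : ∀ a b, ⟪a, H z b⟫ = fderiv ℝ (fderiv ℝ U) z b a := by
    intro a b
    have hA : HasFDerivAt (fun w => ⟪a, gradient U w⟫)
        ((innerSL ℝ a).comp (H z)) z := (innerSL ℝ a).hasFDerivAt.comp z (hH z)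
    have hB : HasFDerivAt (fun w => fderiv ℝ U w a)
        ((ContinuousLinearMap.apply ℝ ℝ a).comp (fderiv ℝ (fderiv ℝ U) z)) z :=
      (ContinuousLinearMap.apply ℝ ℝ a).hasFDerivAt.comp z
        ((h1.differentiable (by norm_num)) z).hasFDerivAt
    rw [hfun a] at hA
    have huniq := hA.unique hB
    calc ⟪a, H z b⟫ = ((innerSL ℝ a).comp (H z)) b := rfl
      _ = ((ContinuousLinearMap.apply ℝ ℝ a).comp (fderiv ℝ (fderiv ℝ U) z)) b := by rw [huniq]
      _ = fderiv ℝ (fderiv ℝ U) z b a := rfl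
  have hsymm : ∀ a b, fderiv ℝ (fderiv ℝ U) z a b = fderiv ℝ (fderiv ℝ U) z b a :=
    hU.contDiffAt.isSymmSndFDerivAt (by norm_num)
  rw [hkey, hkey, hsymm]

/-- The tangent process of the Euler scheme along the segment from `y` to `x`. -/
private noncomputable def tang {d : ℕ}
    (H : EuclideanSpace ℝ (Fin d) → (EuclideanSpace ℝ (Fin d) →L[ℝ] EuclideanSpace ℝ (Fin d)))
    (X : EuclideanSpace ℝ (Fin d) → ℕ → EuclideanSpace ℝ (Fin d)) (γ : ℝ)
    (x y : EuclideanSpace ℝ (Fin d)) : ℕ → ℝ → EuclideanSpace ℝ (Fin d)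
  | 0 => fun _ => x - y
  | (n + 1) => fun l => tang H X γ x y n l -
      γ • H (X (l • x + (1 - l) • y) n) (tang H X γ x y n l)

/-- Pathwise confluence bound for synchronously coupled Euler schemes: if `U` is `C²`
convex with `L`-Lipschitz gradient and `γ ∈ (0, 1/L]`, then
`|X̄^x_{nγ} − X̄^y_{nγ}|² ≤ |x−y|² ∫₀¹ exp(−2γ Σ_{i<n} λ_min(D²U(X̄^{λx+(1−λ)y}_{iγ}))) dλ`. -/
theorem euler_synchronous_coupling_confluence
    {d : ℕ} (hd : 1 ≤ d) (U : EuclideanSpace ℝ (Fin d) → ℝ)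
    (hU : ContDiff ℝ 2 U) (hconv : ConvexOn ℝ Set.univ U)
    (L γ σ : ℝ) (hL : 0 < L) (hγ0 : 0 < γ) (hγL : γ ≤ 1 / L) (hσ : 0 < σ)
    (hLip : LipschitzWith (Real.toNNReal L) (gradient U))
    (H : EuclideanSpace ℝ (Fin d) →
      (EuclideanSpace ℝ (Fin d) →L[ℝ] EuclideanSpace ℝ (Fin d)))
    (hH : ∀ z, HasFDerivAt (gradient U) (H z) z)
    (lam : EuclideanSpace ℝ (Fin d) → ℝ)
    (hlam : ∀ z, IsGreatest {t : ℝ | ∀ v, t * ‖v‖ ^ 2 ≤ ⟪v, H z v⟫} (lam z))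
    (hlam_nonneg : ∀ z, 0 ≤ lam z)
    (Z : ℕ → EuclideanSpace ℝ (Fin d))
    (X : EuclideanSpace ℝ (Fin d) → ℕ → EuclideanSpace ℝ (Fin d))
    (hX0 : ∀ x, X x 0 = x)
    (hXrec : ∀ x n, X x (n + 1) =
      X x n - γ • gradient U (X x n) + (σ * Real.sqrt γ) • Z (n + 1)) :
    ∀ (x y : EuclideanSpace ℝ (Fin d)) (n : ℕ),
      ‖X x n - X y n‖ ^ 2 ≤ ‖x - y‖ ^ 2 *
        ∫ l in (0:ℝ)..1,
          Real.exp (-2 * γ * ∑ i ∈ Finset.range n, lam (X (l • x + (1 - l) • y) i)) := by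
  intro x y n
  have hγL1 : γ * L ≤ 1 := (le_div_iff₀ hL).1 hγL
  have hg1 : ContDiff ℝ 1 (gradient U) := grad_contDiff' U hU
  have hHfd : (fun z => H z) = fderiv ℝ (gradient U) := funext fun z => ((hH z).fderiv).symm
  have hHc : Continuous H := by
    rw [show H = fderiv ℝ (gradient U) from hHfd]
    exact hg1.continuous_fderiv (by norm_num)
  have hHnorm : ∀ z, ‖H z‖ ≤ L := by
    intro z
    have h := (hH z).le_of_lipschitz hLip
    rwa [Real.coe_toNNReal L hL.le] at h
  have hsym := hess_symm' U hU H hH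
  have hlam_mem : ∀ z v, lam z * ‖v‖ ^ 2 ≤ ⟪v, H z v⟫ := fun z => (hlam z).1
  have hinner_ub : ∀ z (v : EuclideanSpace ℝ (Fin d)), ⟪v, H z v⟫ ≤ L * ‖v‖ ^ 2 := by
    intro z v
    calc ⟪v, H z v⟫ ≤ ‖v‖ * ‖H z v‖ := real_inner_le_norm _ _
      _ ≤ ‖v‖ * (‖H z‖ * ‖v‖) := by
          gcongr
          exact (H z).le_opNorm v
      _ ≤ ‖v‖ * (L * ‖v‖) := by
          gcongr
          exact hHnorm z
      _ = L * ‖v‖ ^ 2 := by ring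
  have hγlam : ∀ z, γ * lam z ≤ 1 := by
    intro z
    have hv0 : ‖(EuclideanSpace.single (⟨0, hd⟩ : Fin d) (1:ℝ))‖ = 1 := by
      rw [EuclideanSpace.norm_single]; norm_num
    have h1 := hlam_mem z (EuclideanSpace.single (⟨0, hd⟩ : Fin d) (1:ℝ))
    have h2 := hinner_ub z (EuclideanSpace.single (⟨0, hd⟩ : Fin d) (1:ℝ))
    rw [hv0] at h1 h2
    have hzL : lam z ≤ L := by nlinarith [h1, h2]
    calc γ * lam z ≤ γ * L := by gcongr
      _ ≤ 1 := hγL1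
  -- one-step contraction
  have hstep : ∀ z (w : EuclideanSpace ℝ (Fin d)),
      ‖w - γ • H z w‖ ≤ (1 - γ * lam z) * ‖w‖ := by
    intro z w
    have happ : ∀ v : EuclideanSpace ℝ (Fin d),
        (ContinuousLinearMap.id ℝ (EuclideanSpace ℝ (Fin d)) - γ • H z) v = v - γ • H z v := by
      intro v
      simp [ContinuousLinearMap.sub_apply, ContinuousLinearMap.smul_apply]
    have hs : ∀ u v : EuclideanSpace ℝ (Fin d),
        ⟪(ContinuousLinearMap.id ℝ (EuclideanSpace ℝ (Fin d)) - γ • H z) u, v⟫ =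
        ⟪u, (ContinuousLinearMap.id ℝ (EuclideanSpace ℝ (Fin d)) - γ • H z) v⟫ := by
      intro u v
      rw [happ, happ]
      simp only [inner_sub_left, inner_sub_right, real_inner_smul_left, real_inner_smul_right]
      have e3 : (inner ℝ ((H z) u) v : ℝ) = inner ℝ u ((H z) v) :=
        ((hsym z u v).trans (real_inner_comm ((H z) u) v)).symm
      rw [e3]
    have hp : ∀ v : EuclideanSpace ℝ (Fin d),
        0 ≤ ⟪v, (ContinuousLinearMap.id ℝ (EuclideanSpace ℝ (Fin d)) - γ • H z) v⟫ := by
      intro v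
      rw [happ]
      simp only [inner_sub_right, real_inner_smul_right, real_inner_self_eq_norm_sq]
      have := hinner_ub z v
      nlinarith [this, sq_nonneg ‖v‖]
    have hu : ∀ v : EuclideanSpace ℝ (Fin d),
        ⟪v, (ContinuousLinearMap.id ℝ (EuclideanSpace ℝ (Fin d)) - γ • H z) v⟫ ≤
          (1 - γ * lam z) * ‖v‖ ^ 2 := by
      intro v
      rw [happ]
      simp only [inner_sub_right, real_inner_smul_right, real_inner_self_eq_norm_sq]
      have := hlam_mem z v
      nlinarith [this]
    have hc : (0:ℝ) ≤ 1 - γ * lam z := by linarith [hγlam z]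
    have := contraction_of_symm (ContinuousLinearMap.id ℝ (EuclideanSpace ℝ (Fin d)) - γ • H z)
      (1 - γ * lam z) hc hs hp hu w
    rwa [happ] at this
  -- continuity of the scheme in the interpolation parameter
  have hccont : Continuous (fun l : ℝ => l • x + (1 - l) • y) := by fun_prop
  have hXc : ∀ i, Continuous (fun l : ℝ => X (l • x + (1 - l) • y) i) := by
    intro i
    induction i with
    | zero => simpa only [hX0] using hccont
    | succ i ih =>
      simp only [hXrec]
      exact (ih.sub ((hg1.continuous.comp ih).const_smul γ)).add continuous_const
  have hDc : ∀ i, Continuous (tang H X γ x y i) := by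
    intro i
    induction i with
    | zero => exact continuous_const
    | succ i ih =>
      show Continuous fun l => tang H X γ x y i l -
        γ • H (X (l • x + (1 - l) • y) i) (tang H X γ x y i l)
      exact ih.sub (((hHc.comp (hXc i)).clm_apply ih).const_smul γ)
  -- tangent process is the derivative
  have hDderiv : ∀ i (l : ℝ),
      HasDerivAt (fun l : ℝ => X (l • x + (1 - l) • y) i) (tang H X γ x y i l) l := by
    intro i
    induction i with
    | zero =>
      intro l
      simp only [hX0]
      have h1 : HasDerivAt (fun l : ℝ => l • x) ((1:ℝ) • x) l := (hasDerivAt_id l).smul_const x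
      have h2 : HasDerivAt (fun l : ℝ => (1 - l) • y) ((0 - 1 : ℝ) • y) l :=
        ((hasDerivAt_const l (1:ℝ)).sub (hasDerivAt_id l)).smul_const y
      have h3 := h1.add h2
      convert h3 using 1
      show x - y = (1:ℝ) • x + (0 - 1 : ℝ) • y
      module
      all_goals rfl
    | succ i ih =>
      intro l
      simp only [hXrec]
      have hgd : HasDerivAt (fun l : ℝ => gradient U (X (l • x + (1 - l) • y) i))
          (H (X (l • x + (1 - l) • y) i) (tang H X γ x y i l)) l :=
        (hH _).comp_hasDerivAt l (ih l)
      exact ((ih l).sub (hgd.const_smul γ)).add_const _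
  -- continuity of lam
  have hlam_lip : ∀ a b, lam a ≤ lam b + ‖H a - H b‖ := by
    intro a b
    have hmem : (lam a - ‖H a - H b‖) ∈ {t : ℝ | ∀ v, t * ‖v‖ ^ 2 ≤ ⟪v, H b v⟫} := by
      intro v
      have h1 := hlam_mem a v
      have h2 : ⟪v, H a v⟫ - ⟪v, H b v⟫ ≤ ‖H a - H b‖ * ‖v‖ ^ 2 := by
        have heq : ⟪v, H a v⟫ - ⟪v, H b v⟫ = ⟪v, (H a - H b) v⟫ := by
          simp [inner_sub_right, ContinuousLinearMap.sub_apply]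
        rw [heq]
        calc ⟪v, (H a - H b) v⟫ ≤ ‖v‖ * ‖(H a - H b) v‖ := real_inner_le_norm _ _
          _ ≤ ‖v‖ * (‖H a - H b‖ * ‖v‖) := by
              gcongr
              exact ContinuousLinearMap.le_opNorm _ _
          _ = ‖H a - H b‖ * ‖v‖ ^ 2 := by ring
      nlinarith [h1, h2]
    have := (hlam b).2 hmem
    linarith
  have hlam_cont : Continuous lam := by
    rw [Metric.continuous_iff]
    intro b ε hε
    obtain ⟨δ, hδ, hδ'⟩ := Metric.continuous_iff.1 hHc b ε hε
    refine ⟨δ, hδ, fun a ha => ?_⟩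
    have hdist := hδ' a ha
    have h1 := hlam_lip a b
    have h2 := hlam_lip b a
    have hab : ‖H a - H b‖ = dist (H a) (H b) := (dist_eq_norm _ _).symm
    have hba : ‖H b - H a‖ = dist (H a) (H b) := by
      rw [dist_comm]; exact (dist_eq_norm _ _).symm
    rw [hab] at h1
    rw [hba] at h2
    rw [Real.dist_eq, abs_sub_lt_iff]
    constructor <;> linarith
  -- bound on the tangent process
  have hDbound : ∀ i (l : ℝ), ‖tang H X γ x y i l‖ ≤
      Real.exp (-(γ * ∑ j ∈ Finset.range i, lam (X (l • x + (1 - l) • y) j))) * ‖x - y‖ := by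
    intro i
    induction i with
    | zero => intro l; simp [tang]
    | succ i ih =>
      intro l
      have h1 : ‖tang H X γ x y (i + 1) l‖ ≤
          (1 - γ * lam (X (l • x + (1 - l) • y) i)) * ‖tang H X γ x y i l‖ := by
        show ‖tang H X γ x y i l - γ • H (X (l • x + (1 - l) • y) i) (tang H X γ x y i l)‖ ≤ _
        exact hstep _ _
      have h2 : 1 - γ * lam (X (l • x + (1 - l) • y) i) ≤
          Real.exp (-(γ * lam (X (l • x + (1 - l) • y) i))) := by
        have := Real.add_one_le_exp (-(γ * lam (X (l • x + (1 - l) • y) i)))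
        linarith
      calc ‖tang H X γ x y (i + 1) l‖
          ≤ (1 - γ * lam (X (l • x + (1 - l) • y) i)) * ‖tang H X γ x y i l‖ := h1
        _ ≤ Real.exp (-(γ * lam (X (l • x + (1 - l) • y) i))) *
            (Real.exp (-(γ * ∑ j ∈ Finset.range i, lam (X (l • x + (1 - l) • y) j))) * ‖x - y‖) :=
            mul_le_mul h2 (ih l) (norm_nonneg _) (Real.exp_pos _).le
        _ = Real.exp (-(γ * lam (X (l • x + (1 - l) • y) i)) +
              -(γ * ∑ j ∈ Finset.range i, lam (X (l • x + (1 - l) • y) j))) * ‖x - y‖ := by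
            rw [Real.exp_add]; ring
        _ = Real.exp (-(γ * ∑ j ∈ Finset.range (i + 1), lam (X (l • x + (1 - l) • y) j))) *
              ‖x - y‖ := by
            rw [Finset.sum_range_succ]; ring_nf
  -- fundamental theorem of calculus
  have hFTC : X x n - X y n = ∫ l in (0:ℝ)..1, tang H X γ x y n l := by
    have hint : IntervalIntegrable (tang H X γ x y n) MeasureTheory.volume 0 1 :=
      (hDc n).intervalIntegrable _ _
    have h := intervalIntegral.integral_eq_sub_of_hasDerivAt
      (f := fun l : ℝ => X (l • x + (1 - l) • y) n) (fun t _ => hDderiv n t) hint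
    rw [h]
    norm_num
  -- the exponential integrand
  have hgcont : Continuous
      (fun l : ℝ => Real.exp (-(γ * ∑ i ∈ Finset.range n, lam (X (l • x + (1 - l) • y) i)))) := by
    apply Real.continuous_exp.comp
    apply Continuous.neg
    apply Continuous.mul continuous_const
    exact continuous_finset_sum _ fun i _ => hlam_cont.comp (hXc i)
  set g : ℝ → ℝ :=
    fun l => Real.exp (-(γ * ∑ i ∈ Finset.range n, lam (X (l • x + (1 - l) • y) i))) with hg
  have hnormle : ‖X x n - X y n‖ ≤ (∫ l in (0:ℝ)..1, g l) * ‖x - y‖ := by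
    rw [hFTC]
    calc ‖∫ l in (0:ℝ)..1, tang H X γ x y n l‖
        ≤ ∫ l in (0:ℝ)..1, ‖tang H X γ x y n l‖ :=
          intervalIntegral.norm_integral_le_integral_norm (by norm_num)
      _ ≤ ∫ l in (0:ℝ)..1, g l * ‖x - y‖ := by
          apply intervalIntegral.integral_mono_on (by norm_num)
            ((hDc n).norm.intervalIntegrable _ _)
            ((hgcont.mul continuous_const).intervalIntegrable _ _)
          intro l hl
          exact hDbound n l
      _ = (∫ l in (0:ℝ)..1, g l) * ‖x - y‖ := intervalIntegral.integral_mul_const _ _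
  -- Cauchy–Schwarz on [0,1]
  set I1 : ℝ := ∫ l in (0:ℝ)..1, g l with hI1
  set J : ℝ := ∫ l in (0:ℝ)..1, g l ^ 2 with hJ
  have hCS : I1 ^ 2 ≤ J := by
    have hq : ∀ t : ℝ, 0 ≤ 1 * (t * t) + (2 * I1) * t + J := by
      intro t
      have h0 : 0 ≤ ∫ l in (0:ℝ)..1, (g l + t) ^ 2 :=
        intervalIntegral.integral_nonneg (by norm_num) (fun u _ => sq_nonneg _)
      have hfun : (fun l => (g l + t) ^ 2) = fun l => g l ^ 2 + ((2 * t) * g l + t ^ 2) := by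
        funext l; ring
      rw [hfun] at h0
      rw [intervalIntegral.integral_add (f := fun l => g l ^ 2) (g := fun l => 2 * t * g l + t ^ 2) ((hgcont.pow 2).intervalIntegrable _ _)
        (((continuous_const.mul hgcont).add (continuous_const : Continuous fun _ : ℝ => t ^ 2)).intervalIntegrable _ _),
        intervalIntegral.integral_add (f := fun l => 2 * t * g l) (g := fun _ => t ^ 2) ((continuous_const.mul hgcont).intervalIntegrable _ _)
          (continuous_const.intervalIntegrable _ _),
        intervalIntegral.integral_const_mul, intervalIntegral.integral_const] at h0
      simp only [smul_eq_mul, sub_zero] at h0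
      rw [← hJ, ← hI1] at h0
      nlinarith [h0]
    have hdz := discrim_le_zero hq
    simp only [discrim] at hdz
    nlinarith [hdz]
  -- conclusion
  have hsq : ‖X x n - X y n‖ ^ 2 ≤ (I1 * ‖x - y‖) ^ 2 :=
    pow_le_pow_left₀ (norm_nonneg _) hnormle 2
  have hJeq : J = ∫ l in (0:ℝ)..1,
      Real.exp (-2 * γ * ∑ i ∈ Finset.range n, lam (X (l • x + (1 - l) • y) i)) := by
    rw [hJ]
    apply intervalIntegral.integral_congr
    intro l hl
    show g l ^ 2 = _
    rw [hg]
    rw [sq, ← Real.exp_add]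
    congr 1
    ring
  calc ‖X x n - X y n‖ ^ 2 ≤ (I1 * ‖x - y‖) ^ 2 := hsq
    _ = I1 ^ 2 * ‖x - y‖ ^ 2 := by ring
    _ ≤ J * ‖x - y‖ ^ 2 := by
        apply mul_le_mul_of_nonneg_right hCS (by positivity)
    _ = ‖x - y‖ ^ 2 * ∫ l in (0:ℝ)..1,
          Real.exp (-2 * γ * ∑ i ∈ Finset.range n, lam (X (l • x + (1 - l) • y) i)) := by
        rw [hJeq]; ring
end
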